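/- Let n ≥ 3 and let f : {0,1}^n → ℝ be strictly supermodular, i.e. A^{(ij)} f > 0 for all i ≠ j in [n]. Then the elementary submodular rank of f equals n: f cannot be written as f_0 + f_{i_1} + ⋯ + f_{i_r} with f_0 submodular and each f_{i_j} {i_j}-submodular whenever r + 1 < n. -/
import Mathlib


/-!
Statement 0: A function f : {0,1}^n → ℝ (identified with a function on subsets of [n])
is π-supermodular iff for all i ≠ j the signed elementary imset inequalities
τ_i τ_j A^{(ij)} f ≥ 0 hold.

We encode a tuple π of linear orders on {0,1} by its sign vector
τ : Fin n → Bool, where `true` means the standard order 0 < 1 (sign +1)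
and `false` means the reversed order 1 < 0 (sign −1).
-/

/-- Componentwise meet of two subsets (as indicator vectors) w.r.t. the
product order with sign vector `τ`. -/
def piMeet {n : ℕ} (τ : Fin n → Bool) (S T : Finset (Fin n)) : Finset (Fin n) :=
  Finset.univ.filter fun i => if τ i then i ∈ S ∧ i ∈ T else i ∈ S ∨ i ∈ T

/-- Componentwise join of two subsets (as indicator vectors) w.r.t. the
product order with sign vector `τ`. -/
def piJoin {n : ℕ} (τ : Fin n → Bool) (S T : Finset (Fin n)) : Finset (Fin n) :=
  Finset.univ.filter fun i => if τ i then i ∈ S ∨ i ∈ T else i ∈ S ∧ i ∈ T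

/-- `f` is supermodular w.r.t. the product order with sign vector `τ`. -/
def IsPiSupermodular {n : ℕ} (τ : Fin n → Bool) (f : Finset (Fin n) → ℝ) : Prop :=
  ∀ S T : Finset (Fin n), f S + f T ≤ f (piMeet τ S T) + f (piJoin τ S T)

/-- The sign τ_i ∈ {±1} of the i-th linear order, as a real number. -/
noncomputable def signR {n : ℕ} (τ : Fin n → Bool) (i : Fin n) : ℝ :=
  if τ i then 1 else -1

/-- The elementary imset expression: the row of `A^{(ij)} f` corresponding to
`z ⊆ [n] ∖ {i,j}`, namely `f(z) + f(z ∪ {i,j}) − f(z ∪ {i}) − f(z ∪ {j})`. -/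
def imsetExpr {n : ℕ} (f : Finset (Fin n) → ℝ) (i j : Fin n) (z : Finset (Fin n)) : ℝ :=
  f z + f (insert i (insert j z)) - f (insert i z) - f (insert j z)

/-- A set function is submodular: f(S∩T) + f(S∪T) ≤ f(S) + f(T). -/
def IsSubmodular {n : ℕ} (f : Finset (Fin n) → ℝ) : Prop :=
  ∀ S T : Finset (Fin n), f (S ∩ T) + f (S ∪ T) ≤ f S + f T

/-- The sign vector with −1 in coordinate `i` and +1 elsewhere. -/
def elemSign {n : ℕ} (i : Fin n) : Fin n → Bool := fun j => decide (j ≠ i)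

/-- `f` is {i}-submodular: −f is π-supermodular for the tuple of linear orders
whose sign vector has τ_i = −1 and τ_j = 1 for j ≠ i. -/
def IsElemSubmodular {n : ℕ} (i : Fin n) (f : Finset (Fin n) → ℝ) : Prop :=
  IsPiSupermodular (elemSign i) (fun S => -(f S))

-- auxiliary lemmas

lemma inter_ins {n : ℕ} {j k : Fin n} {z : Finset (Fin n)} (hjk : j ≠ k) (hj : j ∉ z)
    (hk : k ∉ z) : insert j z ∩ insert k z = z := by
  ext l
  simp only [Finset.mem_inter, Finset.mem_insert]
  constructor
  · rintro ⟨h1 | h1, h2 | h2⟩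
    · subst h1; exact absurd h2 hjk
    · exact h2
    · exact h1
    · exact h1
  · exact fun h => ⟨Or.inr h, Or.inr h⟩

lemma union_ins {n : ℕ} {j k : Fin n} {z : Finset (Fin n)} :
    insert j z ∪ insert k z = insert j (insert k z) := by
  ext l; simp only [Finset.mem_union, Finset.mem_insert]; tauto

lemma imset_nonpos_of_submod {n : ℕ} {g : Finset (Fin n) → ℝ} (hg : IsSubmodular g)
    {j k : Fin n} (hjk : j ≠ k) {z : Finset (Fin n)} (hj : j ∉ z) (hk : k ∉ z) :
    imsetExpr g j k z ≤ 0 := by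
  have h := hg (insert j z) (insert k z)
  rw [inter_ins hjk hj hk, union_ins] at h
  unfold imsetExpr; linarith

lemma marginal_mono {n : ℕ} (g : Finset (Fin n) → ℝ)
    (h : ∀ (j k : Fin n) (z : Finset (Fin n)), j ≠ k → j ∉ z → k ∉ z →
      imsetExpr g j k z ≤ 0) :
    ∀ (T S : Finset (Fin n)) (i : Fin n), S ⊆ T → i ∉ T →
      g (insert i T) - g T ≤ g (insert i S) - g S := by
  intro T
  induction T using Finset.strongInduction with
  | _ T ih =>
    intro S i hST hiT
    by_cases hTS : T ⊆ S
    · have : S = T := Finset.Subset.antisymm hST hTS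
      subst this
      exact le_refl _
    · obtain ⟨j, hjT, hjS⟩ := Finset.not_subset.mp hTS
      set T' := T.erase j with hT'
      have hT'lt : T' ⊂ T := Finset.erase_ssubset hjT
      have hST' : S ⊆ T' := Finset.subset_erase.mpr ⟨hST, fun hc => hjS hc⟩
      have hiT' : i ∉ T' := fun h' => hiT (Finset.mem_of_mem_erase h')
      have hij : i ≠ j := fun hc => hiT (hc ▸ hjT)
      have hjT' : j ∉ T' := Finset.notMem_erase j T
      have hloc := h i j T' hij hiT' hjT'
      have hins : insert j T' = T := Finset.insert_erase hjT
      unfold imsetExpr at hloc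
      rw [hins] at hloc
      have step : g (insert i T) - g T ≤ g (insert i T') - g T' := by linarith
      exact le_trans step (ih T' hT'lt S i hST' hiT')

lemma local_to_submod {n : ℕ} (g : Finset (Fin n) → ℝ)
    (h : ∀ (j k : Fin n) (z : Finset (Fin n)), j ≠ k → j ∉ z → k ∉ z →
      imsetExpr g j k z ≤ 0) : IsSubmodular g := by
  intro S T
  induction S using Finset.strongInduction with
  | _ S ih =>
    by_cases hST : S ⊆ T
    · rw [Finset.inter_eq_left.mpr hST, Finset.union_eq_right.mpr hST]
    · obtain ⟨i, hiS, hiT⟩ := Finset.not_subset.mp hST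
      set S' := S.erase i with hS'
      have hlt : S' ⊂ S := Finset.erase_ssubset hiS
      have ihS := ih S' hlt
      have hiS' : i ∉ S' := Finset.notMem_erase _ _
      have hiU : i ∉ S' ∪ T := by
        simp only [Finset.mem_union]
        exact fun hc => hc.elim hiS' hiT
      have key := marginal_mono g h (S' ∪ T) S' i Finset.subset_union_left hiU
      have e1 : insert i S' = S := Finset.insert_erase hiS
      have e2 : insert i (S' ∪ T) = S ∪ T := by rw [← Finset.insert_union, e1]
      have e3 : S' ∩ T = S ∩ T := by
        ext l
        simp only [hS', Finset.mem_inter, Finset.mem_erase]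
        constructor
        · rintro ⟨⟨_, h1⟩, h2⟩; exact ⟨h1, h2⟩
        · rintro ⟨h1, h2⟩; exact ⟨⟨fun hc => hiT (hc ▸ h2), h1⟩, h2⟩
      rw [e1, e2] at key
      rw [e3] at ihS
      linarith

lemma piMeet_elem_iff {n : ℕ} (i : Fin n) (S T : Finset (Fin n)) (h : i ∈ S ↔ i ∈ T) :
    piMeet (elemSign i) S T = S ∩ T := by
  ext l
  simp only [piMeet, elemSign, Finset.mem_filter, Finset.mem_univ, true_and,
    Finset.mem_inter, decide_eq_true_eq]
  by_cases hl : l = i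
  · subst hl; simp only [ne_eq, not_true_eq_false, if_false]; tauto
  · simp only [ne_eq, hl, not_false_eq_true, if_true]

lemma piJoin_elem_iff {n : ℕ} (i : Fin n) (S T : Finset (Fin n)) (h : i ∈ S ↔ i ∈ T) :
    piJoin (elemSign i) S T = S ∪ T := by
  ext l
  simp only [piJoin, elemSign, Finset.mem_filter, Finset.mem_univ, true_and,
    Finset.mem_union, decide_eq_true_eq]
  by_cases hl : l = i
  · subst hl; simp only [ne_eq, not_true_eq_false, if_false]; tauto
  · simp only [ne_eq, hl, not_false_eq_true, if_true]

lemma piMeet_elem_mixed {n : ℕ} (i : Fin n) (S T : Finset (Fin n)) (hS : i ∈ S) (hT : i ∉ T) :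
    piMeet (elemSign i) S T = insert i (S ∩ T) := by
  ext l
  simp only [piMeet, elemSign, Finset.mem_filter, Finset.mem_univ, true_and,
    Finset.mem_insert, Finset.mem_inter, decide_eq_true_eq]
  by_cases hl : l = i
  · subst hl; simp only [ne_eq, not_true_eq_false, if_false]; tauto
  · simp only [ne_eq, hl, not_false_eq_true, if_true]; tauto

lemma piJoin_elem_mixed {n : ℕ} (i : Fin n) (S T : Finset (Fin n)) (hS : i ∈ S) (hT : i ∉ T) :
    piJoin (elemSign i) S T = (S ∪ T).erase i := by
  ext l
  simp only [piJoin, elemSign, Finset.mem_filter, Finset.mem_univ, true_and,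
    Finset.mem_erase, Finset.mem_union, decide_eq_true_eq]
  by_cases hl : l = i
  · subst hl; simp only [ne_eq, not_true_eq_false, if_false]; tauto
  · simp only [ne_eq, hl, not_false_eq_true, if_true]; tauto

lemma elem_imset_nonpos {n : ℕ} {i : Fin n} {g : Finset (Fin n) → ℝ}
    (hg : IsElemSubmodular i g) {j k : Fin n} (hjk : j ≠ k) (hij : i ≠ j) (hik : i ≠ k)
    {z : Finset (Fin n)} (hj : j ∉ z) (hk : k ∉ z) : imsetExpr g j k z ≤ 0 := by
  have h := hg (insert j z) (insert k z)
  have hiff : i ∈ insert j z ↔ i ∈ insert k z := by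
    simp [Finset.mem_insert, hij, hik]
  rw [piMeet_elem_iff i _ _ hiff, piJoin_elem_iff i _ _ hiff, inter_ins hjk hj hk,
    union_ins] at h
  unfold imsetExpr
  simp only at h
  linarith

/-- The gadget: `gadget C i S = 0` if `i ∈ S`, else `-C * |S|`. -/
noncomputable def gadget {n : ℕ} (C : ℝ) (i : Fin n) (S : Finset (Fin n)) : ℝ :=
  if i ∈ S then 0 else -C * S.card

lemma gadget_elemSubmodular {n : ℕ} {C : ℝ} (hC : 0 ≤ C) (i : Fin n) :
    IsElemSubmodular i (gadget C i) := by
  intro S T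
  simp only
  by_cases hS : i ∈ S <;> by_cases hT : i ∈ T
  · have hM := piMeet_elem_iff i S T (by tauto)
    have hJ := piJoin_elem_iff i S T (by tauto)
    rw [hM, hJ]
    simp [gadget, hS, hT, Finset.mem_inter, Finset.mem_union]
  · rw [piMeet_elem_mixed i S T hS hT, piJoin_elem_mixed i S T hS hT]
    have h1 : gadget C i S = 0 := by simp [gadget, hS]
    have h2 : gadget C i (insert i (S ∩ T)) = 0 := by simp [gadget]
    have h3 : gadget C i T = -C * T.card := by simp [gadget, hT]
    have h4 : gadget C i ((S ∪ T).erase i) = -C * ((S ∪ T).erase i).card := by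
      simp [gadget, Finset.notMem_erase]
    have hsub : T ⊆ (S ∪ T).erase i :=
      Finset.subset_erase.mpr ⟨Finset.subset_union_right, hT⟩
    have hcard : (T.card : ℝ) ≤ ((S ∪ T).erase i).card := by
      exact_mod_cast Finset.card_le_card hsub
    rw [h1, h2, h3, h4]
    nlinarith
  · have hM : piMeet (elemSign i) S T = piMeet (elemSign i) T S := by
      unfold piMeet; congr 1; funext l; by_cases h : elemSign i l <;> simp [h] <;> tauto
    have hJ : piJoin (elemSign i) S T = piJoin (elemSign i) T S := by
      unfold piJoin; congr 1; funext l; by_cases h : elemSign i l <;> simp [h] <;> tauto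
    rw [hM, hJ, piMeet_elem_mixed i T S hT hS, piJoin_elem_mixed i T S hT hS]
    have h1 : gadget C i T = 0 := by simp [gadget, hT]
    have h2 : gadget C i (insert i (T ∩ S)) = 0 := by simp [gadget]
    have h3 : gadget C i S = -C * S.card := by simp [gadget, hS]
    have h4 : gadget C i ((T ∪ S).erase i) = -C * ((T ∪ S).erase i).card := by
      simp [gadget, Finset.notMem_erase]
    have hsub : S ⊆ (T ∪ S).erase i :=
      Finset.subset_erase.mpr ⟨Finset.subset_union_right, hS⟩
    have hcard : (S.card : ℝ) ≤ ((T ∪ S).erase i).card := by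
      exact_mod_cast Finset.card_le_card hsub
    rw [h1, h2, h3, h4]
    nlinarith
  · have hM := piMeet_elem_iff i S T (by tauto)
    have hJ := piJoin_elem_iff i S T (by tauto)
    rw [hM, hJ]
    have hiM : i ∉ S ∩ T := by simp [hS, hT]
    have hiJ : i ∉ S ∪ T := by simp [hS, hT]
    have h1 : gadget C i S = -C * S.card := by simp [gadget, hS]
    have h2 : gadget C i T = -C * T.card := by simp [gadget, hT]
    have h3 : gadget C i (S ∩ T) = -C * (S ∩ T).card := by simp [gadget, hiM]
    have h4 : gadget C i (S ∪ T) = -C * (S ∪ T).card := by simp [gadget, hiJ]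
    have hc : (S ∩ T).card + (S ∪ T).card = S.card + T.card :=
      Finset.card_inter_add_card_union S T
    have hc' : ((S ∩ T).card : ℝ) + (S ∪ T).card = S.card + T.card := by exact_mod_cast hc
    rw [h1, h2, h3, h4]
    nlinarith

lemma gadget_imset_self {n : ℕ} (C : ℝ) {j k : Fin n} (hjk : j ≠ k)
    {z : Finset (Fin n)} (hj : j ∉ z) (hk : k ∉ z) :
    imsetExpr (gadget C j) j k z = C := by
  have hjkz : j ∉ insert k z := by simp [Finset.mem_insert, hjk, hj]
  have c1 : (insert k z).card = z.card + 1 := Finset.card_insert_of_notMem hk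
  unfold imsetExpr gadget
  rw [if_neg hj, if_pos (Finset.mem_insert_self j (insert k z)),
    if_pos (Finset.mem_insert_self j z), if_neg hjkz, c1]
  push_cast; ring

lemma gadget_imset_other {n : ℕ} (C : ℝ) {i j k : Fin n} (hjk : j ≠ k) (hij : i ≠ j)
    (hik : i ≠ k) {z : Finset (Fin n)} (hj : j ∉ z) (hk : k ∉ z) :
    imsetExpr (gadget C i) j k z = 0 := by
  by_cases hiz : i ∈ z
  · have h1 : i ∈ insert j z := Finset.mem_insert_of_mem hiz
    have h2 : i ∈ insert k z := Finset.mem_insert_of_mem hiz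
    have h3 : i ∈ insert j (insert k z) := Finset.mem_insert_of_mem h2
    unfold imsetExpr gadget
    rw [if_pos hiz, if_pos h3, if_pos h1, if_pos h2]
    ring
  · have h1 : i ∉ insert j z := by simp [Finset.mem_insert, hij, hiz]
    have h2 : i ∉ insert k z := by simp [Finset.mem_insert, hik, hiz]
    have h3 : i ∉ insert j (insert k z) := by simp [Finset.mem_insert, hij, hik, hiz]
    have hjkz : j ∉ insert k z := by simp [Finset.mem_insert, hjk, hj]
    have c1 : (insert j z).card = z.card + 1 := Finset.card_insert_of_notMem hj
    have c2 : (insert k z).card = z.card + 1 := Finset.card_insert_of_notMem hk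
    have c3 : (insert j (insert k z)).card = z.card + 2 := by
      rw [Finset.card_insert_of_notMem hjkz, c2]
    unfold imsetExpr gadget
    rw [if_neg hiz, if_neg h3, if_neg h1, if_neg h2, c1, c2, c3]
    push_cast; ring

lemma gadget_imset_nonneg {n : ℕ} {C : ℝ} (hC : 0 ≤ C) (i : Fin n) {j k : Fin n}
    (hjk : j ≠ k) {z : Finset (Fin n)} (hj : j ∉ z) (hk : k ∉ z) :
    0 ≤ imsetExpr (gadget C i) j k z := by
  by_cases hij : i = j
  · subst hij; rw [gadget_imset_self C hjk hj hk]; exact hC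
  · by_cases hik : i = k
    · subst hik
      have := gadget_imset_self C (Ne.symm hjk) hk hj
      have hcomm : imsetExpr (gadget C i) j i z = imsetExpr (gadget C i) i j z := by
        unfold imsetExpr
        rw [Finset.insert_comm]
        ring
      rw [hcomm, this]; exact hC
    · rw [gadget_imset_other C hjk hij hik hj hk]

lemma imset_comm {n : ℕ} (g : Finset (Fin n) → ℝ) (i j : Fin n) (z : Finset (Fin n)) :
    imsetExpr g i j z = imsetExpr g j i z := by
  unfold imsetExpr; rw [Finset.insert_comm]; ring

lemma imset_sub_sum {n : ℕ} (g : Finset (Fin n) → ℝ) (B : Finset (Fin n))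
    (h : Fin n → Finset (Fin n) → ℝ) (j k : Fin n) (z : Finset (Fin n)) :
    imsetExpr (fun S => g S - ∑ i ∈ B, h i S) j k z
      = imsetExpr g j k z - ∑ i ∈ B, imsetExpr (h i) j k z := by
  unfold imsetExpr
  rw [Finset.sum_sub_distrib, Finset.sum_sub_distrib, Finset.sum_add_distrib]
  ring

/-!
Statement 6: for n ≥ 3, a strictly supermodular function f (i.e. A^{(ij)} f > 0
for all i ≠ j) has elementary submodular rank exactly n: it admits a
decomposition f = f₀ + Σ_{i ∈ B} f_i with |B| = n − 1 (f₀ submodular, f_i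
{i}-submodular), but no such decomposition f = f₀ + f_{i_1} + ⋯ + f_{i_r}
with r + 1 < n.
-/
theorem statement6 (n : ℕ) (hn : 3 ≤ n) (f : Finset (Fin n) → ℝ)
    (hstrict : ∀ i j : Fin n, i ≠ j → ∀ z : Finset (Fin n), i ∉ z → j ∉ z →
      0 < imsetExpr f i j z) :
    (∃ (B : Finset (Fin n)) (f₀ : Finset (Fin n) → ℝ)
        (F : Fin n → Finset (Fin n) → ℝ),
        B.card = n - 1 ∧ IsSubmodular f₀ ∧ (∀ i ∈ B, IsElemSubmodular i (F i)) ∧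
        f = f₀ + ∑ i ∈ B, F i) ∧
    (∀ r : ℕ, r + 1 < n →
      ∀ (B : Finset (Fin n)) (f₀ : Finset (Fin n) → ℝ)
        (F : Fin n → Finset (Fin n) → ℝ),
        B.card ≤ r → IsSubmodular f₀ → (∀ i ∈ B, IsElemSubmodular i (F i)) →
        f ≠ f₀ + ∑ i ∈ B, F i) := by
  classical
  set C : ℝ := ∑ p : Fin n × Fin n × Finset (Fin n), |imsetExpr f p.1 p.2.1 p.2.2|
    with hCdef
  have hC0 : 0 ≤ C := Finset.sum_nonneg fun _ _ => abs_nonneg _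
  have hCb : ∀ i j z, imsetExpr f i j z ≤ C := by
    intro i j z
    calc imsetExpr f i j z ≤ |imsetExpr f i j z| := le_abs_self _
      _ ≤ C := Finset.single_le_sum
          (f := fun p : Fin n × Fin n × Finset (Fin n) => |imsetExpr f p.1 p.2.1 p.2.2|)
          (fun _ _ => abs_nonneg _) (Finset.mem_univ (i, j, z))
  constructor
  · -- existence of a decomposition with |B| = n - 1
    have hn1 : 0 < n := by omega
    set a : Fin n := ⟨0, hn1⟩ with ha
    set B : Finset (Fin n) := Finset.univ.erase a with hB
    refine ⟨B, fun S => f S - ∑ i ∈ B, gadget C i S, fun i => gadget C i, ?_, ?_, ?_, ?_⟩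
    · rw [hB, Finset.card_erase_of_mem (Finset.mem_univ a), Finset.card_univ,
        Fintype.card_fin]
    · apply local_to_submod
      intro j k z hjk hj hk
      rw [imset_sub_sum]
      obtain ⟨i0, hi0B, hi0⟩ : ∃ i0 ∈ B, imsetExpr (gadget C i0) j k z = C := by
        by_cases hjB : j ∈ B
        · exact ⟨j, hjB, gadget_imset_self C hjk hj hk⟩
        · have hja : j = a := by
            by_contra hc
            exact hjB (Finset.mem_erase.mpr ⟨hc, Finset.mem_univ j⟩)
          have hka : k ≠ a := fun hc => hjk (hja.trans hc.symm)
          refine ⟨k, Finset.mem_erase.mpr ⟨hka, Finset.mem_univ k⟩, ?_⟩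
          rw [imset_comm]
          exact gadget_imset_self C (Ne.symm hjk) hk hj
      have hsum : C ≤ ∑ i ∈ B, imsetExpr (gadget C i) j k z := by
        calc C = imsetExpr (gadget C i0) j k z := hi0.symm
          _ ≤ _ := Finset.single_le_sum
              (fun i _ => gadget_imset_nonneg hC0 i hjk hj hk) hi0B
      linarith [hCb j k z]
    · exact fun i _ => gadget_elemSubmodular hC0 i
    · funext S
      simp only [Pi.add_apply, Finset.sum_apply]
      ring
  · -- no decomposition with fewer parts
    intro r hr B f₀ F hcard hsub helem heq
    have h2 : 2 ≤ (Finset.univ \ B).card := by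
      have h := Finset.card_sdiff_of_subset (Finset.subset_univ B)
      rw [Finset.card_univ, Fintype.card_fin] at h
      omega
    obtain ⟨j, hj, k, hk, hjk⟩ := Finset.one_lt_card.mp (by omega : 1 < (Finset.univ \ B).card)
    have hjB : j ∉ B := (Finset.mem_sdiff.mp hj).2
    have hkB : k ∉ B := (Finset.mem_sdiff.mp hk).2
    have hpos := hstrict j k hjk ∅ (Finset.notMem_empty j) (Finset.notMem_empty k)
    have hsplit : imsetExpr f j k ∅
        = imsetExpr f₀ j k ∅ + ∑ i ∈ B, imsetExpr (F i) j k ∅ := by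
      rw [heq]
      unfold imsetExpr
      simp only [Pi.add_apply, Finset.sum_apply]
      rw [Finset.sum_sub_distrib, Finset.sum_sub_distrib, Finset.sum_add_distrib]
      ring
    have h3 := imset_nonpos_of_submod hsub hjk (Finset.notMem_empty j)
      (Finset.notMem_empty k)
    have h4 : ∑ i ∈ B, imsetExpr (F i) j k ∅ ≤ 0 :=
      Finset.sum_nonpos fun i hi =>
        elem_imset_nonpos (helem i hi) hjk (fun hc => hjB (hc ▸ hi))
          (fun hc => hkB (hc ▸ hi)) (Finset.notMem_empty j) (Finset.notMem_empty k)
    linarith
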